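/- Let M = (S, f, s₀, 𝔉) be a deterministic Muller automaton over Bool in which every state is reachable from s₀. Then μ(L(M)) = 0 if and only if no leaf connected component g of M satisfies g ∈ 𝔉. -/

import Mathlib

open MeasureTheory Filter

/-- The fair-coin product probability measure on Cantor space `ℕ → Bool`,
constructed as the pushforward of Lebesgue measure on `[0,1)` under binary expansion. -/
noncomputable def mu : Measure (ℕ → Bool) :=
  Measure.map (fun x n => decide (⌊x * 2 ^ (n + 1)⌋ % 2 = 1))
    (volume.restrict (Set.Ico (0 : ℝ) 1))

/-- Action of a word on a state of an automaton. -/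
def act {S A : Type*} (f : S → A → S) (s : S) (w : List A) : S := w.foldl f s

/-- The run of a sequence `X` on the machine `(S, f, s₀)`. -/
def run {S : Type*} (f : S → Bool → S) (s₀ : S) (X : ℕ → Bool) : ℕ → S
  | 0 => s₀
  | n + 1 => f (run f s₀ X n) (X n)

/-- `t` is reachable from `s`. -/
def Reach {S : Type*} (f : S → Bool → S) (s t : S) : Prop := ∃ w : List Bool, act f s w = t

/-- The connected component of a state `s`. -/
def component {S : Type*} (f : S → Bool → S) (s : S) : Set S :=
  {t | Reach f s t ∧ Reach f t s}

/-- `g` is a leaf connected component. -/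
def IsLeafComponent {S : Type*} (f : S → Bool → S) (g : Set S) : Prop :=
  (∃ s, g = component f s) ∧ ∀ s ∈ g, ∀ t, Reach f s t → Reach f t s

/-- The word `w` occurs as a subword of the sequence `X`. -/
def Occurs (w : List Bool) (X : ℕ → Bool) : Prop :=
  ∃ n, ∀ k < w.length, X (n + k) = w.getD k false

/-- `X` is disjunctive: every word occurs in `X` as a subword. -/
def Disjunctive (X : ℕ → Bool) : Prop := ∀ w : List Bool, Occurs w X

/-- The word `w` is a prefix of the sequence `X`. -/
def IsPrefixOfSeq (w : List Bool) (X : ℕ → Bool) : Prop :=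
  ∀ k < w.length, X k = w.getD k false

/-- `[L]`: the set of sequences having some prefix in the language `L`. -/
def cyl (L : Set (List Bool)) : Set (ℕ → Bool) := {X | ∃ w ∈ L, IsPrefixOfSeq w X}

/-- `I(X)`: the set of states visited infinitely often by the run of `X`. -/
def InfOcc {S : Type*} (f : S → Bool → S) (s₀ : S) (X : ℕ → Bool) : Set S :=
  {s | ∃ᶠ n in atTop, run f s₀ X n = s}

/-- `X` is accepted by the deterministic Büchi automaton `(S, f, s₀, F)`. -/
def BuchiAccepts {S : Type*} (f : S → Bool → S) (s₀ : S) (F : Set S) (X : ℕ → Bool) : Prop :=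
  ∃ᶠ n in atTop, run f s₀ X n ∈ F

/-- A language is regular if it is accepted by a DFA with finitely many states. -/
def Regular {A : Type} (L : Set (List A)) : Prop :=
  ∃ (S : Type) (_ : Fintype S) (f : S → A → S) (s₀ : S) (F : Set S),
    L = {w | act f s₀ w ∈ F}

/-- The convolution of two words. -/
def conv (x i : List Bool) : List (Option Bool × Option Bool) :=
  (List.range (max x.length i.length)).map (fun k => (x[k]?, i[k]?))

/-- `(I, U)` is an automatic family. -/
def IsAutomaticFamily (I : Set (List Bool)) (U : List Bool → Set (List Bool)) : Prop :=
  Regular I ∧ Regular {c | ∃ i ∈ I, ∃ x ∈ U i, c = conv x i}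

/-- `(I, U)` is an automatic randomness test (ART). -/
def IsART (I : Set (List Bool)) (U : List Bool → Set (List Bool)) : Prop :=
  IsAutomaticFamily I U ∧ ∀ ε : ENNReal, 0 < ε → ∃ i ∈ I, mu (cyl (U i)) ≤ ε

/-- `(I, U)` is a Martin-Löf automatic randomness test (MART). -/
def IsMART (I : Set (List Bool)) (U : List Bool → Set (List Bool)) : Prop :=
  IsAutomaticFamily I U ∧ I.Infinite ∧
    ∀ i ∈ I, mu (cyl (U i)) ≤ (2 : ENNReal) ^ (-(i.length : ℤ))

/-- The covering region `F(I, U)` of a test. -/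
def coverRegion (I : Set (List Bool)) (U : List Bool → Set (List Bool)) : Set (ℕ → Bool) :=
  ⋂ i ∈ I, cyl (U i)

noncomputable def digitmap : ℝ → ℕ → Bool := fun x n => decide (⌊x * 2 ^ (n + 1)⌋ % 2 = 1)

lemma measurable_digitmap : Measurable digitmap := by
  apply measurable_pi_lambda
  intro n
  have h1 : Measurable fun x : ℝ => ⌊x * 2 ^ (n + 1)⌋ :=
    Int.measurable_floor.comp (measurable_id.mul_const _)
  exact (measurable_from_top (f := fun z : ℤ => decide (z % 2 = 1))).comp h1

def Cyl (n : ℕ) (v : ℕ → Bool) : Set (ℕ → Bool) := {X | ∀ k < n, X k = v k}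

lemma measurableSet_Cyl (n : ℕ) (v : ℕ → Bool) : MeasurableSet (Cyl n v) := by
  have : Cyl n v = ⋂ k ∈ Set.Iio n, (fun X : ℕ → Bool => X k) ⁻¹' {v k} := by
    ext X; simp [Cyl]
  rw [this]
  exact MeasurableSet.biInter (Set.to_countable _)
    (fun k _ => (measurable_pi_apply k) (MeasurableSet.singleton _))

lemma floor_double (y : ℝ) : ⌊2 * y⌋ = 2 * ⌊y⌋ ∨ ⌊2 * y⌋ = 2 * ⌊y⌋ + 1 := by
  have h0 : ((2 * ⌊y⌋ : ℤ) : ℝ) ≤ 2 * y := by push_cast; nlinarith [Int.floor_le y]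
  have h1 : (2 * ⌊y⌋ : ℤ) ≤ ⌊2 * y⌋ := Int.le_floor.mpr h0
  have h2 : (2 * y) < ((2 * ⌊y⌋ + 2 : ℤ) : ℝ) := by push_cast; nlinarith [Int.lt_floor_add_one y]
  have h3 : ⌊2 * y⌋ < 2 * ⌊y⌋ + 2 := Int.floor_lt.mpr h2
  omega

def cylcode (v : ℕ → Bool) : ℕ → ℕ
  | 0 => 0
  | n + 1 => 2 * cylcode v n + (if v n then 1 else 0)

lemma cylcode_lt (v : ℕ → Bool) (n : ℕ) : cylcode v n < 2 ^ n := by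
  induction n with
  | zero => simp [cylcode]
  | succ n ih => simp only [cylcode, pow_succ]; split <;> omega

lemma digit_iff (x : ℝ) (hx : x ∈ Set.Ico (0:ℝ) 1) (v : ℕ → Bool) (n : ℕ) :
    (∀ k < n, digitmap x k = v k) ↔ ⌊x * 2 ^ n⌋ = (cylcode v n : ℤ) := by
  induction n with
  | zero =>
      simp only [cylcode, Nat.cast_zero, pow_zero, mul_one]
      rw [Int.floor_eq_zero_iff]
      simp only [Set.mem_Ico] at hx ⊢
      constructor
      · intro _; exact ⟨hx.1, hx.2⟩
      · intro _ k hk; omega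
  | succ n ih =>
      have key : ⌊x * 2 ^ (n+1)⌋ = 2 * ⌊x * 2 ^ n⌋ ∨ ⌊x * 2 ^ (n+1)⌋ = 2 * ⌊x * 2 ^ n⌋ + 1 := by
        have hxx : x * 2 ^ (n+1) = 2 * (x * 2 ^ n) := by ring
        rw [hxx]; exact floor_double _
      have hccn : cylcode v (n+1) = 2 * cylcode v n + (if v n then 1 else 0) := rfl
      have hcc : (cylcode v (n+1) : ℤ) = 2 * (cylcode v n : ℤ) + (if v n then 1 else 0) := by
        rw [hccn]; split <;> push_cast <;> ring
      constructor
      · intro h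
        have h1 : ⌊x * 2 ^ n⌋ = (cylcode v n : ℤ) := ih.mp (fun k hk => h k (by omega))
        have h2 : digitmap x n = v n := h n (by omega)
        rcases key with k1 | k1 <;> cases hvn : v n <;>
          simp only [digitmap, hvn, decide_eq_false_iff_not, decide_eq_true_eq, k1] at h2 <;>
          rw [hcc, hvn] <;> simp <;> omega
      · intro h
        rw [hcc] at h
        have h1 : ⌊x * 2 ^ n⌋ = (cylcode v n : ℤ) := by
          rcases key with k1 | k1 <;> split at h <;> omega
        intro k hk
        rcases Nat.lt_succ_iff_lt_or_eq.mp hk with hk' | rfl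
        · exact ih.mpr h1 k hk'
        · cases hvn : v k <;>
            simp only [digitmap, decide_eq_false_iff_not, decide_eq_true_eq] <;>
            [skip; skip] <;> rcases key with k1 | k1 <;> rw [hvn] at h <;> simp at h <;> omega

lemma preimage_Cyl (n : ℕ) (v : ℕ → Bool) :
    digitmap ⁻¹' (Cyl n v) ∩ Set.Ico (0:ℝ) 1 =
      Set.Ico ((cylcode v n : ℝ) / 2 ^ n) ((cylcode v n + 1 : ℝ) / 2 ^ n) := by
  have h2n : (0:ℝ) < 2 ^ n := by positivity
  ext x
  simp only [Set.mem_inter_iff, Set.mem_preimage, Set.mem_Ico]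
  constructor
  · rintro ⟨hd, hx0, hx1⟩
    have hfl := (digit_iff x ⟨hx0, hx1⟩ v n).mp hd
    have hle : ((cylcode v n : ℤ) : ℝ) ≤ x * 2 ^ n := hfl ▸ Int.floor_le (x * 2 ^ n)
    have hlt : x * 2 ^ n < (cylcode v n : ℤ) + 1 := hfl ▸ Int.lt_floor_add_one (x * 2 ^ n)
    push_cast at hle hlt
    constructor
    · rw [div_le_iff₀ h2n]; linarith
    · rw [lt_div_iff₀ h2n]; linarith
  · rintro ⟨h1, h2⟩
    rw [div_le_iff₀ h2n] at h1
    rw [lt_div_iff₀ h2n] at h2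
    have hcl := cylcode_lt v n
    have hcl' : (cylcode v n : ℝ) + 1 ≤ 2 ^ n := by
      have : ((cylcode v n : ℝ) + 1) = ((cylcode v n + 1 : ℕ) : ℝ) := by push_cast; ring
      rw [this]
      exact_mod_cast Nat.cast_le.mpr (by exact_mod_cast hcl)
    have hx0 : 0 ≤ x := by nlinarith [(cylcode v n).cast_nonneg (α := ℝ)]
    have hx1 : x < 1 := by nlinarith
    refine ⟨(digit_iff x ⟨hx0, hx1⟩ v n).mpr ?_, hx0, hx1⟩
    rw [Int.floor_eq_iff] <;> push_cast <;> constructor <;> linarith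

lemma mu_Cyl (n : ℕ) (v : ℕ → Bool) : mu (Cyl n v) = ((2:ENNReal) ^ n)⁻¹ := by
  have hmap : mu = Measure.map digitmap (volume.restrict (Set.Ico (0 : ℝ) 1)) := rfl
  rw [hmap, Measure.map_apply measurable_digitmap (measurableSet_Cyl n v),
    Measure.restrict_apply (measurable_digitmap (measurableSet_Cyl n v)), preimage_Cyl]
  rw [Real.volume_Ico]
  have h2n : (0:ℝ) < 2 ^ n := by positivity
  have : (cylcode v n + 1 : ℝ) / 2 ^ n - (cylcode v n : ℝ) / 2 ^ n = (2 ^ n)⁻¹ := by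
    field_simp
    ring
  rw [this, ENNReal.ofReal_inv_of_pos h2n, ENNReal.ofReal_pow (by norm_num : (0:ℝ) ≤ 2)]
  norm_num

def pad {n : ℕ} (v : Fin n → Bool) : ℕ → Bool := fun k => if h : k < n then v ⟨k, h⟩ else false

lemma Cyl_pad {n : ℕ} (v : Fin n → Bool) :
    Cyl n (pad v) = {X : ℕ → Bool | (fun k : Fin n => X k.1) = v} := by
  ext X
  simp only [Cyl, Set.mem_setOf_eq, funext_iff]
  constructor
  · intro h k; exact (h k.1 k.2).trans (by simp [pad, k.2])
  · intro h k hk; exact (h ⟨k, hk⟩).trans (by simp [pad, hk])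

lemma mu_finset (n : ℕ) (A : Finset (Fin n → Bool)) :
    mu {X : ℕ → Bool | (fun k : Fin n => X k.1) ∈ A} = A.card * ((2:ENNReal) ^ n)⁻¹ := by
  have hs : {X : ℕ → Bool | (fun k : Fin n => X k.1) ∈ A} = ⋃ v ∈ A, Cyl n (pad v) := by
    ext X
    simp only [Set.mem_setOf_eq, Set.mem_iUnion, Cyl_pad]
    constructor
    · intro h; exact ⟨_, h, rfl⟩
    · rintro ⟨v, hv, h⟩; rw [h]; exact hv
  rw [hs, measure_biUnion_finset ?hd (fun v _ => measurableSet_Cyl n (pad v))]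
  · simp [mu_Cyl]
  case hd =>
    intro v₁ h₁ v₂ h₂ hne
    simp only [Function.onFun, Cyl_pad]
    apply Set.disjoint_left.mpr
    intro X hX1 hX2
    exact hne (hX1 ▸ hX2 ▸ rfl)

lemma mu_univ : mu Set.univ = 1 := by
  have := mu_Cyl 0 (fun _ => false)
  simpa [Cyl] using this

instance : IsProbabilityMeasure mu := ⟨mu_univ⟩

lemma idx_lt {j k L m : ℕ} (hj : j < m) (hk : k < L) : j * L + k < m * L := by
  have h1 : j * L + k < (j + 1) * L := by rw [add_mul, one_mul]; omega
  exact lt_of_lt_of_le h1 (Nat.mul_le_mul_right L hj)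

lemma mu_notOccurs (w : List Bool) : mu {X : ℕ → Bool | ¬ Occurs w X} = 0 := by
  rcases eq_or_ne w [] with rfl | hw
  · have : {X : ℕ → Bool | ¬ Occurs [] X} = ∅ := by
      ext X; simp [Occurs]
    simp [this]
  · set L := w.length with hL
    have hL0 : 0 < L := List.length_pos_iff.mpr hw
    set r : ENNReal := ((2 ^ L - 1 : ℕ) : ENNReal) / ((2 ^ L : ℕ) : ENNReal) with hr
    have hbound : ∀ m : ℕ, mu {X : ℕ → Bool | ¬ Occurs w X} ≤ r ^ m := by
      intro m
      set A : Finset (Fin (m * L) → Bool) :=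
        Finset.univ.filter
          (fun v => ∀ j < m, ∃ k < L, pad v (j * L + k) ≠ w.getD k false) with hA
      have hsub : {X : ℕ → Bool | ¬ Occurs w X} ⊆
          {X : ℕ → Bool | (fun k : Fin (m * L) => X k.1) ∈ A} := by
        intro X hX
        simp only [Set.mem_setOf_eq, Occurs, not_exists] at hX
        simp only [Set.mem_setOf_eq, hA, Finset.mem_filter, Finset.mem_univ, true_and]
        intro j hj
        have := hX (j * L)
        push_neg at this
        obtain ⟨k, hk, hne⟩ := this
        exact ⟨k, hk, by simp only [pad]; rw [dif_pos (idx_lt hj hk)]; exact hne⟩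
      have hcard : A.card ≤ (2 ^ L - 1) ^ m := by
        classical
        set wf : Fin L → Bool := fun k => w.getD k.1 false with hwf
        set B : Finset (Fin m → (Fin L → Bool)) :=
          Fintype.piFinset (fun _ => Finset.univ.filter (fun u : Fin L → Bool => u ≠ wf)) with hB
        have hcb : B.card = (2 ^ L - 1) ^ m := by
          rw [hB, Fintype.card_piFinset]
          have : (Finset.univ.filter (fun u : Fin L → Bool => u ≠ wf)).card = 2 ^ L - 1 := by
            rw [Finset.filter_ne' Finset.univ wf, Finset.card_erase_of_mem (Finset.mem_univ _)]
            simp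
          simp [this]
        rw [← hcb]
        apply Finset.card_le_card_of_injOn
          (fun v j k => v ⟨j.1 * L + k.1, idx_lt j.2 k.2⟩)
        · intro v hv
          rw [hA, Finset.mem_coe, Finset.mem_filter] at hv
          rw [Finset.mem_coe, hB, Fintype.mem_piFinset]
          intro j
          simp only [Finset.mem_filter, Finset.mem_univ, true_and]
          obtain ⟨k, hk, hne⟩ := hv.2 j.1 j.2
          intro heq
          apply hne
          have hcf : v ⟨j.1 * L + k, idx_lt j.2 hk⟩ = wf ⟨k, hk⟩ := congrFun heq ⟨k, hk⟩
          have hpv : pad v (j.1 * L + k) = v ⟨j.1 * L + k, idx_lt j.2 hk⟩ := by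
            simp [pad, idx_lt j.2 hk]
          rw [hpv, hcf, hwf]
        · intro v₁ _ v₂ _ heq
          funext i
          have hkL : i.1 % L < L := Nat.mod_lt _ hL0
          have hjm : i.1 / L < m := (Nat.div_lt_iff_lt_mul hL0).mpr i.2
          have := congrFun (congrFun heq ⟨i.1 / L, hjm⟩) ⟨i.1 % L, hkL⟩
          simp only at this
          have hidx : (⟨i.1 / L * L + i.1 % L, idx_lt hjm hkL⟩ : Fin (m * L)) = i := by
            apply Fin.ext
            simp only
            rw [Nat.mul_comm]
            exact Nat.div_add_mod i.1 L
          rwa [hidx] at this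
      calc mu {X : ℕ → Bool | ¬ Occurs w X}
          ≤ mu {X : ℕ → Bool | (fun k : Fin (m * L) => X k.1) ∈ A} := measure_mono hsub
        _ = A.card * ((2:ENNReal) ^ (m * L))⁻¹ := mu_finset _ _
        _ ≤ ((2 ^ L - 1) ^ m : ℕ) * ((2:ENNReal) ^ (m * L))⁻¹ := by
              have : (A.card : ENNReal) ≤ ((2 ^ L - 1) ^ m : ℕ) := by exact_mod_cast hcard
              gcongr
        _ = r ^ m := by
              have e1 : ((2 ^ L : ℕ) : ENNReal) = (2 : ENNReal) ^ L := by push_cast; rfl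
              rw [hr, ENNReal.div_eq_inv_mul, mul_pow, ← ENNReal.inv_pow, e1, ← pow_mul,
                mul_comm L m, Nat.cast_pow, mul_comm]
    have hr1 : r < 1 := by
      rw [hr, ENNReal.div_lt_iff (Or.inl (by positivity)) (Or.inl (by simp))]
      rw [one_mul]
      exact_mod_cast Nat.sub_lt (by positivity) one_pos
    have htend : Tendsto (fun m => r ^ m) atTop (nhds 0) :=
      ENNReal.tendsto_pow_atTop_nhds_zero_of_lt_one hr1
    have := ge_of_tendsto htend (Eventually.of_forall hbound)
    simpa using this

lemma mu_notDisjunctive : mu {X : ℕ → Bool | ¬ Disjunctive X} = 0 := by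
  have hsub : {X : ℕ → Bool | ¬ Disjunctive X} ⊆
      ⋃ w : List Bool, {X : ℕ → Bool | ¬ Occurs w X} := by
    intro X hX
    simp only [Set.mem_setOf_eq, Disjunctive, not_forall] at hX
    obtain ⟨w, hw⟩ := hX
    exact Set.mem_iUnion.mpr ⟨w, hw⟩
  exact measure_mono_null hsub (measure_iUnion_null fun w => mu_notOccurs w)

section Automaton

variable {S : Type*} (f : S → Bool → S) (s₀ : S) (X : ℕ → Bool)

lemma act_append (s : S) (l₁ l₂ : List Bool) :
    act f s (l₁ ++ l₂) = act f (act f s l₁) l₂ := List.foldl_append ..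

lemma run_add (n k : ℕ) :
    run f s₀ X (n + k) = act f (run f s₀ X n) ((List.range k).map fun i => X (n + i)) := by
  induction k with
  | zero => simp [act]
  | succ k ih =>
      rw [← Nat.add_assoc]
      show f (run f s₀ X (n + k)) (X (n + k)) = _
      rw [ih, List.range_succ, List.map_append, act_append]
      simp [act]

lemma read_take {v : List Bool} {n : ℕ} (hocc : ∀ k < v.length, X (n + k) = v.getD k false)
    {i : ℕ} (hi : i ≤ v.length) :
    ((List.range i).map fun j => X (n + j)) = v.take i := by
  apply List.ext_getElem
  · simp [hi]
  · intro k h1 h2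
    simp only [List.getElem_map, List.getElem_range, List.getElem_take]
    have hk : k < v.length := by simp at h2; omega
    rw [hocc k hk, List.getD_eq_getElem v false hk]

lemma mem_infOcc_iff (s : S) :
    s ∈ InfOcc f s₀ X ↔ ∀ N, ∃ n ≥ N, run f s₀ X n = s := by
  simp [InfOcc, Filter.frequently_atTop]

lemma eventually_mem_infOcc [Finite S] :
    ∃ n₀, ∀ n ≥ n₀, run f s₀ X n ∈ InfOcc f s₀ X := by
  have h : ∀ᶠ n in atTop, ∀ s : S, s ∉ InfOcc f s₀ X → run f s₀ X n ≠ s := by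
    rw [eventually_all]
    intro s
    by_cases hs : s ∈ InfOcc f s₀ X
    · exact Eventually.of_forall fun n h => absurd h (by simp [hs])
    · have : ¬ ∃ᶠ n in atTop, run f s₀ X n = s := hs
      rw [Filter.not_frequently] at this
      filter_upwards [this] with n hn _
      exact hn
  obtain ⟨n₀, hn₀⟩ := eventually_atTop.mp h
  exact ⟨n₀, fun n hn => by_contra fun hc => hn₀ n hn _ hc rfl⟩

lemma reach_of_infOcc {s t : S} (hs : s ∈ InfOcc f s₀ X) (ht : t ∈ InfOcc f s₀ X) :
    Reach f s t := by
  rw [mem_infOcc_iff] at hs ht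
  obtain ⟨n₁, -, h₁⟩ := hs 0
  obtain ⟨n₂, hn₂, h₂⟩ := ht n₁
  exact ⟨(List.range (n₂ - n₁)).map fun i => X (n₁ + i), by
    rw [← h₁, ← run_add, Nat.add_sub_cancel' hn₂, h₂]⟩

lemma late_occurs (hX : Disjunctive X) (v : List Bool) (n₀ : ℕ) :
    ∃ n ≥ n₀, ∀ k < v.length, X (n + k) = v.getD k false := by
  obtain ⟨p, hp⟩ := hX (List.replicate n₀ false ++ v)
  refine ⟨p + n₀, by omega, fun k hk => ?_⟩
  have h1 := hp (n₀ + k) (by simp; omega)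
  rw [← Nat.add_assoc] at h1
  rw [h1, List.getD_append_right _ _ _ _ (by simp : (List.replicate n₀ false).length ≤ n₀ + k)]
  simp

end Automaton

section Killer

variable {S : Type*} (f : S → Bool → S)

lemma act_singleton (s : S) (b : Bool) : act f s [b] = f s b := rfl

lemma act_mem_of_closed {g : Set S} (hcl : ∀ q ∈ g, ∀ b, f q b ∈ g) :
    ∀ (w : List Bool) (q : S), q ∈ g → act f q w ∈ g := by
  intro w
  induction w with
  | nil => intro q hq; exact hq
  | cons a w ih =>
      intro q hq
      show act f (f q a) w ∈ g
      exact ih _ (hcl q hq a)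

lemma killer {C : Set S} {s : S} {b : Bool}
    (hreach : ∀ q ∈ C, Reach f q s) (hesc : f s b ∉ C) :
    ∀ (n : ℕ) (Q : Finset S), Q.card ≤ n → ↑Q ⊆ C →
      ∃ v : List Bool, ∀ q ∈ Q, ∃ i ≤ v.length, act f q (List.take i v) ∉ C := by
  classical
  intro n
  induction n with
  | zero =>
      intro Q hQ _
      rw [Nat.le_zero, Finset.card_eq_zero] at hQ
      exact ⟨[], by simp [hQ]⟩
  | succ n ih =>
      intro Q hQn hQC
      rcases Q.eq_empty_or_nonempty with rfl | ⟨qs, hqs⟩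
      · exact ⟨[], by simp⟩
      obtain ⟨p, hp⟩ := hreach qs (hQC hqs)
      set v₀ : List Bool := p ++ [b] with hv₀
      have hescs : act f qs v₀ ∉ C := by
        rw [hv₀, act_append, hp, act_singleton]; exact hesc
      set Q' : Finset S :=
        ((Q.erase qs).filter (fun q => ∀ i ≤ v₀.length, act f q (List.take i v₀) ∈ C)).image
          (fun q => act f q v₀) with hQ'
      have hQ'C : ↑Q' ⊆ C := by
        intro x hx
        simp only [hQ', Finset.coe_image, Set.mem_image, Finset.mem_coe, Finset.mem_filter] at hx
        obtain ⟨q, ⟨-, hsur⟩, rfl⟩ := hx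
        have := hsur v₀.length le_rfl
        rwa [List.take_length] at this
      have hQ'n : Q'.card ≤ n := by
        calc Q'.card ≤ ((Q.erase qs).filter _).card := Finset.card_image_le
          _ ≤ (Q.erase qs).card := Finset.card_filter_le _ _
          _ = Q.card - 1 := Finset.card_erase_of_mem hqs
          _ ≤ n := by omega
      obtain ⟨v', hv'⟩ := ih Q' hQ'n hQ'C
      refine ⟨v₀ ++ v', fun q hq => ?_⟩
      by_cases hsur : ∀ i ≤ v₀.length, act f q (List.take i v₀) ∈ C
      · have hqne : q ≠ qs := by
          rintro rfl
          exact hescs (by simpa [List.take_length] using hsur v₀.length le_rfl)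
        have hmem : act f q v₀ ∈ Q' := by
          rw [hQ']
          exact Finset.mem_image_of_mem _
            (Finset.mem_filter.mpr ⟨Finset.mem_erase.mpr ⟨hqne, hq⟩, hsur⟩)
        obtain ⟨i', hi', hout⟩ := hv' _ hmem
        refine ⟨v₀.length + i', by simp; omega, ?_⟩
        rw [List.take_length_add_append, act_append]
        exact hout
      · push_neg at hsur
        obtain ⟨i, hi, hout⟩ := hsur
        refine ⟨i, by simp; omega, ?_⟩
        rwa [List.take_append_of_le_length hi]

end Killer

section InfLeaf

variable {S : Type*} [Finite S] (f : S → Bool → S) (s₀ : S) (X : ℕ → Bool)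

lemma infOcc_closed (hX : Disjunctive X) :
    ∀ s ∈ InfOcc f s₀ X, ∀ b, f s b ∈ InfOcc f s₀ X := by
  classical
  intro s hs b
  by_contra hesc
  set C := InfOcc f s₀ X with hC
  obtain ⟨n₀, hn₀⟩ := eventually_mem_infOcc f s₀ X
  have hreach : ∀ q ∈ C, Reach f q s := fun q hq => reach_of_infOcc f s₀ X hq hs
  obtain ⟨v, hv⟩ := killer f hreach hesc (Set.toFinite C).toFinset.card
    (Set.toFinite C).toFinset le_rfl (by simp)
  obtain ⟨n, hn, hocc⟩ := late_occurs X hX v n₀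
  have hqC : run f s₀ X n ∈ C := hn₀ n hn
  obtain ⟨i, hi, hout⟩ := hv (run f s₀ X n) ((Set.Finite.mem_toFinset _).mpr hqC)
  apply hout
  have : act f (run f s₀ X n) (List.take i v) = run f s₀ X (n + i) := by
    rw [run_add, read_take X hocc hi]
  rw [this]
  exact hn₀ (n + i) (by omega)

lemma infOcc_isLeaf (hX : Disjunctive X) : IsLeafComponent f (InfOcc f s₀ X) := by
  set C := InfOcc f s₀ X with hC
  have hcl : ∀ q ∈ C, ∀ b, f q b ∈ C := infOcc_closed f s₀ X hX
  have hact : ∀ (w : List Bool) (q : S), q ∈ C → act f q w ∈ C := act_mem_of_closed f hcl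
  obtain ⟨n₀, hn₀⟩ := eventually_mem_infOcc f s₀ X
  have hsC : run f s₀ X n₀ ∈ C := hn₀ n₀ le_rfl
  constructor
  · refine ⟨run f s₀ X n₀, ?_⟩
    ext t
    constructor
    · intro ht
      exact ⟨reach_of_infOcc f s₀ X hsC ht, reach_of_infOcc f s₀ X ht hsC⟩
    · rintro ⟨⟨w, hw⟩, -⟩
      exact hw ▸ hact w _ hsC
  · rintro q hq t ⟨w, hw⟩
    exact reach_of_infOcc f s₀ X (hw ▸ hact w q hq) hq

end InfLeaf

section Leaf

variable {S : Type*} (f : S → Bool → S)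

lemma reach_trans {a b c : S} (h1 : Reach f a b) (h2 : Reach f b c) : Reach f a c := by
  obtain ⟨w₁, hw₁⟩ := h1
  obtain ⟨w₂, hw₂⟩ := h2
  exact ⟨w₁ ++ w₂, by rw [act_append, hw₁, hw₂]⟩

lemma leaf_closed {g : Set S} (hg : IsLeafComponent f g) :
    ∀ q ∈ g, ∀ b, f q b ∈ g := by
  obtain ⟨⟨sc, rfl⟩, hleaf⟩ := hg
  rintro q ⟨hsq, hqs⟩ b
  have h1 : Reach f q (f q b) := ⟨[b], rfl⟩
  have h2 : Reach f (f q b) q := hleaf q ⟨hsq, hqs⟩ _ h1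
  exact ⟨reach_trans f hsq h1, reach_trans f h2 hqs⟩

lemma reach_in_leaf {g : Set S} (hg : IsLeafComponent f g) {q t : S}
    (hq : q ∈ g) (ht : t ∈ g) : Reach f q t := by
  obtain ⟨⟨sc, rfl⟩, -⟩ := hg
  exact reach_trans f hq.2 ht.1

lemma visit_list {g : Set S} {t : S} (hcl : ∀ q ∈ g, ∀ b, f q b ∈ g)
    (hre : ∀ q ∈ g, Reach f q t) :
    ∀ (n : ℕ) (l : List S), l.length = n → (∀ q ∈ l, q ∈ g) →
      ∃ V : List Bool, ∀ q ∈ l, ∃ i ≤ V.length, act f q (List.take i V) = t := by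
  intro n
  induction n with
  | zero =>
      intro l hlen _
      rw [List.length_eq_zero_iff] at hlen
      exact ⟨[], by simp [hlen]⟩
  | succ n ih =>
      rintro (_ | ⟨q, l⟩) hlen hl
      · exact ⟨[], by simp⟩
      obtain ⟨v, hv⟩ := hre q (hl q List.mem_cons_self)
      obtain ⟨V', hV'⟩ := ih (l.map (fun q' => act f q' v)) (by simpa using Nat.succ_injective hlen) (by
        intro x hx
        obtain ⟨q', hq', rfl⟩ := List.mem_map.mp hx
        exact act_mem_of_closed f hcl v q' (hl q' (List.mem_cons_of_mem _ hq')))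
      refine ⟨v ++ V', fun p hp => ?_⟩
      rcases List.mem_cons.mp hp with rfl | hp'
      · exact ⟨v.length, by simp, by rw [List.take_left]; exact hv⟩
      · obtain ⟨i', hi', hact⟩ := hV' (act f p v) (List.mem_map.mpr ⟨p, hp', rfl⟩)
        refine ⟨v.length + i', by simp; omega, ?_⟩
        rw [List.take_length_add_append, act_append]
        exact hact

end Leaf

section LeafInf

variable {S : Type*} [Finite S] (f : S → Bool → S) (s₀ : S) (X : ℕ → Bool)

lemma leaf_infOcc_eq {g : Set S} (hg : IsLeafComponent f g) (hX : Disjunctive X)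
    (n₀ : ℕ) (hrun : run f s₀ X n₀ ∈ g) : InfOcc f s₀ X = g := by
  classical
  have hcl := leaf_closed f hg
  have hstay : ∀ n ≥ n₀, run f s₀ X n ∈ g := by
    intro n hn
    have : n = n₀ + (n - n₀) := by omega
    rw [this, run_add]
    exact act_mem_of_closed f hcl _ _ hrun
  ext t
  constructor
  · intro ht
    obtain ⟨n, hn, hrt⟩ := (mem_infOcc_iff f s₀ X t).mp ht n₀
    exact hrt ▸ hstay n hn
  · intro htg
    obtain ⟨V, hV⟩ := visit_list f hcl (fun q hq => reach_in_leaf f hg hq htg)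
      _ (Set.toFinite g).toFinset.toList rfl
      (fun q hq => (Set.Finite.mem_toFinset _).mp (Finset.mem_toList.mp hq))
    rw [mem_infOcc_iff]
    intro N
    obtain ⟨n, hn, hocc⟩ := late_occurs X hX V (max n₀ N)
    have hqg : run f s₀ X n ∈ g := hstay n (by omega)
    obtain ⟨i, hi, hact⟩ := hV (run f s₀ X n)
      (Finset.mem_toList.mpr ((Set.Finite.mem_toFinset _).mpr hqg))
    refine ⟨n + i, by omega, ?_⟩
    rw [run_add, read_take X hocc hi]
    exact hact

lemma run_of_prefix (w : List Bool) (hw : ∀ k < w.length, X k = w.getD k false) :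
    run f s₀ X w.length = act f s₀ w := by
  have h0 : ∀ k < w.length, X (0 + k) = w.getD k false := by simpa using hw
  have := run_add f s₀ X 0 w.length
  rw [read_take X h0 le_rfl, List.take_length] at this
  simpa [show run f s₀ X 0 = s₀ from rfl] using this

end LeafInf

/-- A deterministic Muller automaton (with all states reachable) has
measure-zero language iff no leaf connected component belongs to the accepting collection. -/
theorem stmt7 {S : Type} [Fintype S] (f : S → Bool → S) (s₀ : S) (𝔉 : Set (Set S))
    (hreach : ∀ s : S, Reach f s₀ s) :
    mu {X : ℕ → Bool | InfOcc f s₀ X ∈ 𝔉} = 0 ↔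
      ∀ g : Set S, IsLeafComponent f g → g ∉ 𝔉 := by
  constructor
  · intro h0 g hg hgF
    obtain ⟨sc, hgc⟩ := hg.1
    have hsc : sc ∈ g := by rw [hgc]; exact ⟨⟨[], rfl⟩, ⟨[], rfl⟩⟩
    obtain ⟨w, hw⟩ := hreach sc
    have hsub : Cyl w.length (fun k => w.getD k false) ∩ {X | Disjunctive X} ⊆
        {X : ℕ → Bool | InfOcc f s₀ X ∈ 𝔉} := by
      rintro X ⟨hpre, hdisj⟩
      have hrun : run f s₀ X w.length ∈ g := by
        rw [run_of_prefix f s₀ X w hpre, hw]; exact hsc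
      have : InfOcc f s₀ X = g := leaf_infOcc_eq f s₀ X hg hdisj w.length hrun
      simp only [Set.mem_setOf_eq, this]
      exact hgF
    have hcylsub : Cyl w.length (fun k => w.getD k false) ⊆
        (Cyl w.length (fun k => w.getD k false) ∩ {X | Disjunctive X}) ∪
          {X | ¬ Disjunctive X} := by
      intro X hX
      by_cases hd : Disjunctive X
      · exact Or.inl ⟨hX, hd⟩
      · exact Or.inr hd
    have hle : mu (Cyl w.length (fun k => w.getD k false)) ≤ 0 := by
      calc mu (Cyl w.length (fun k => w.getD k false))
          ≤ mu ((Cyl w.length (fun k => w.getD k false) ∩ {X | Disjunctive X}) ∪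
              {X | ¬ Disjunctive X}) := measure_mono hcylsub
        _ ≤ mu (Cyl w.length (fun k => w.getD k false) ∩ {X | Disjunctive X}) +
              mu {X : ℕ → Bool | ¬ Disjunctive X} := measure_union_le _ _
        _ ≤ mu {X : ℕ → Bool | InfOcc f s₀ X ∈ 𝔉} + mu {X : ℕ → Bool | ¬ Disjunctive X} :=
              add_le_add (measure_mono hsub) le_rfl
        _ = 0 := by rw [h0, mu_notDisjunctive, add_zero]
    rw [mu_Cyl] at hle
    have hne : ((2:ENNReal) ^ w.length)⁻¹ ≠ 0 := by
      rw [Ne, ENNReal.inv_eq_zero]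
      exact ENNReal.pow_ne_top (by simp)
    exact hne (le_antisymm hle (by positivity))
  · intro hno
    refine measure_mono_null ?_ mu_notDisjunctive
    intro X hX
    simp only [Set.mem_setOf_eq] at hX ⊢
    intro hdisj
    exact hno _ (infOcc_isLeaf f s₀ X hdisj) hX
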